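/- Let K be a field of characteristic 0, let A be a K-algebra, and let a, b ∈ A satisfy a² = b² = 0. If the element a·b is transcendental over K, then the family of elements {(ab)^i : i ≥ 0} ∪ {(ab)^i a : i ≥ 0} ∪ {b(ab)^i : i ≥ 0} ∪ {b(ab)^i a : i ≥ 0} is linearly independent over K (equivalently, the K-subalgebra K[a,b] is isomorphic to the relatively free algebra K⟨x,y⟩/(x², y²) via x ↦ a, y ↦ b). -/

import Mathlib

open Polynomial


/-- **Lemma (Lemma 2.1).** Let `K` be a field of characteristic `0`, `A` a `K`-algebra
and `a, b ∈ A` with `a² = b² = 0`. If `ab` is transcendental over `K`, then the family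
`{(ab)^i} ∪ {(ab)^i·a} ∪ {b·(ab)^i} ∪ {b·(ab)^i·a}` (for `i ≥ 0`) is linearly
independent over `K`. -/
theorem linearIndependent_of_transcendental (K A : Type*) [Field K] [CharZero K]
    [Ring A] [Algebra K A] (a b : A) (ha : a ^ 2 = 0) (hb : b ^ 2 = 0)
    (htr : Transcendental K (a * b)) :
    LinearIndependent K (fun p : ℕ ⊕ ℕ ⊕ ℕ ⊕ ℕ =>
      match p with
      | .inl i => (a * b) ^ i
      | .inr (.inl i) => (a * b) ^ i * a
      | .inr (.inr (.inl i)) => b * (a * b) ^ i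
      | .inr (.inr (.inr i)) => b * (a * b) ^ i * a) := by
  classical
  have haa : a * a = 0 := by rw [← pow_two]; exact ha
  have hbb : b * b = 0 := by rw [← pow_two]; exact hb
  have hbb2 : ∀ z : A, b * (b * z) = 0 := fun z => by rw [← mul_assoc, hbb, zero_mul]
  -- key lemma: b * c(ab) * a = 0 implies c = 0
  have hba : ∀ c : K[X], b * aeval (a * b) c * a = 0 → c = 0 := by
    intro c hc
    have h3 : a * (b * aeval (a * b) c * a) * b = 0 := by rw [hc, mul_zero, zero_mul]
    have h2 : aeval (a * b) (X * (c * X)) = 0 := by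
      have : aeval (a * b) (X * (c * X)) = a * (b * aeval (a * b) c * a) * b := by
        simp only [map_mul, aeval_X, mul_assoc]
      rw [this, h3]
    have h4 := transcendental_iff.mp htr _ h2
    rcases mul_eq_zero.mp h4 with h | h
    · exact absurd h X_ne_zero
    rcases mul_eq_zero.mp h with h | h
    · exact h
    · exact absurd h X_ne_zero
  have hmain : ∀ p q r s : K[X],
      aeval (a * b) p + aeval (a * b) q * a + b * aeval (a * b) r + b * aeval (a * b) s * a = 0 →
      p = 0 ∧ q = 0 ∧ r = 0 ∧ s = 0 := by
    intro p q r s h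
    have hp : p = 0 := by
      apply hba
      have h1 := congrArg (fun x => b * x * a) h
      simp only [mul_add, add_mul, mul_zero, zero_mul, mul_assoc, haa, hbb2,
        add_zero, zero_add] at h1
      simpa [mul_assoc] using h1
    rw [hp, map_zero, zero_add] at h
    have hq : q = 0 := by
      apply hba
      have h1 := congrArg (fun x => b * x) h
      simp only [mul_add, add_mul, mul_zero, zero_mul, mul_assoc, haa, hbb2,
        add_zero, zero_add] at h1
      simpa [mul_assoc] using h1
    rw [hq, map_zero, zero_mul, zero_add] at h
    have hr : r = 0 := by
      apply hba
      have h1 := congrArg (fun x => x * a) h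
      simp only [mul_add, add_mul, mul_zero, zero_mul, mul_assoc, haa, hbb2,
        add_zero, zero_add] at h1
      simpa [mul_assoc] using h1
    rw [hr, map_zero, mul_zero, zero_add] at h
    exact ⟨hp, hq, hr, hba _ h⟩
  -- injections
  have hi2 : Function.Injective (fun i : ℕ => (Sum.inr (Sum.inl i) : ℕ ⊕ ℕ ⊕ ℕ ⊕ ℕ)) := by
    intro i j h; simpa using h
  have hi3 : Function.Injective
      (fun i : ℕ => (Sum.inr (Sum.inr (Sum.inl i)) : ℕ ⊕ ℕ ⊕ ℕ ⊕ ℕ)) := by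
    intro i j h; simpa using h
  have hi4 : Function.Injective
      (fun i : ℕ => (Sum.inr (Sum.inr (Sum.inr i)) : ℕ ⊕ ℕ ⊕ ℕ ⊕ ℕ)) := by
    intro i j h; simpa using h
  rw [linearIndependent_iff]
  intro l hl
  have key : ∀ m : (ℕ ⊕ ℕ ⊕ ℕ ⊕ ℕ) →₀ K,
      Finsupp.linearCombination K (fun p : ℕ ⊕ ℕ ⊕ ℕ ⊕ ℕ =>
        match p with
        | .inl i => (a * b) ^ i
        | .inr (.inl i) => (a * b) ^ i * a
        | .inr (.inr (.inl i)) => b * (a * b) ^ i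
        | .inr (.inr (.inr i)) => b * (a * b) ^ i * a) m =
      aeval (a * b) (⟨.ofCoeff (m.comapDomain Sum.inl Sum.inl_injective.injOn)⟩ : K[X]) +
      aeval (a * b) (⟨.ofCoeff (m.comapDomain _ hi2.injOn)⟩ : K[X]) * a +
      b * aeval (a * b) (⟨.ofCoeff (m.comapDomain _ hi3.injOn)⟩ : K[X]) +
      b * aeval (a * b) (⟨.ofCoeff (m.comapDomain _ hi4.injOn)⟩ : K[X]) * a := by
    intro m
    induction m using Finsupp.induction_linear with
    | zero => simp [Finsupp.comapDomain_zero]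
    | add f g hf hg =>
        rw [map_add, hf, hg,
          Finsupp.comapDomain_add_of_injective Sum.inl_injective,
          Finsupp.comapDomain_add_of_injective hi2,
          Finsupp.comapDomain_add_of_injective hi3,
          Finsupp.comapDomain_add_of_injective hi4]
        have ofa : ∀ u v : ℕ →₀ K, (⟨.ofCoeff (u + v)⟩ : K[X]) = (⟨.ofCoeff u⟩ : K[X]) + ⟨.ofCoeff v⟩ :=
          fun u v => by rw [AddMonoidAlgebra.ofCoeff_add]; exact Polynomial.ofFinsupp_add
        simp only [ofa, map_add, add_mul, mul_add]
        abel
    | single x k =>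
        have hcz : ∀ (g : ℕ → ℕ ⊕ ℕ ⊕ ℕ ⊕ ℕ) (hg : Set.InjOn g _),
            (∀ i, g i ≠ x) →
            Finsupp.comapDomain g (Finsupp.single x k) hg = 0 := by
          intro g hg hne
          ext i
          rw [Finsupp.comapDomain_apply, Finsupp.single_apply,
            if_neg (fun h => hne i h.symm)]
          simp
        have hcs : ∀ (g : ℕ → ℕ ⊕ ℕ ⊕ ℕ ⊕ ℕ) (hginj : Function.Injective g) (j : ℕ)
            (hg : Set.InjOn g _),
            Finsupp.comapDomain g (Finsupp.single (g j) k) hg = Finsupp.single j k := by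
          intro g hginj j hg
          ext i
          rw [Finsupp.comapDomain_apply]
          simp [Finsupp.single_apply, hginj.eq_iff]
        cases x with
        | inl i =>
            rw [Finsupp.linearCombination_single,
              hcs _ Sum.inl_injective i, hcz _ _ (by simp), hcz _ _ (by simp),
              hcz _ _ (by simp)]
            simp [AddMonoidAlgebra.ofCoeff_single, Polynomial.ofFinsupp_single, aeval_monomial, Algebra.smul_def]
        | inr x => cases x with
          | inl i =>
              rw [Finsupp.linearCombination_single,
                hcs _ hi2 i, hcz _ _ (by simp), hcz _ _ (by simp), hcz _ _ (by simp)]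
              simp [AddMonoidAlgebra.ofCoeff_single, Polynomial.ofFinsupp_single, aeval_monomial, Algebra.smul_def, mul_assoc]
          | inr x => cases x with
            | inl i =>
                rw [Finsupp.linearCombination_single,
                  hcs _ hi3 i, hcz _ _ (by simp), hcz _ _ (by simp), hcz _ _ (by simp)]
                simp [AddMonoidAlgebra.ofCoeff_single, Polynomial.ofFinsupp_single, aeval_monomial, Algebra.smul_def,
                  mul_assoc, Algebra.left_comm]
            | inr i =>
                rw [Finsupp.linearCombination_single,
                  hcs _ hi4 i, hcz _ _ (by simp), hcz _ _ (by simp), hcz _ _ (by simp)]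
                simp [AddMonoidAlgebra.ofCoeff_single, Polynomial.ofFinsupp_single, aeval_monomial, Algebra.smul_def,
                  mul_assoc, Algebra.left_comm]
  rw [key l] at hl
  obtain ⟨h1, h2, h3, h4⟩ := hmain _ _ _ _ hl
  rw [Polynomial.ofFinsupp_eq_zero, AddMonoidAlgebra.ofCoeff_eq_zero] at h1 h2 h3 h4
  have c1 : ∀ (g : ℕ → ℕ ⊕ ℕ ⊕ ℕ ⊕ ℕ) (hg : Set.InjOn g _),
      Finsupp.comapDomain g l hg = 0 → ∀ i, l (g i) = 0 := by
    intro g hg h0 i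
    have := Finsupp.ext_iff.mp h0 i
    rwa [Finsupp.comapDomain_apply, Finsupp.coe_zero, Pi.zero_apply] at this
  ext x
  cases x with
  | inl i => exact c1 _ _ h1 i
  | inr x => cases x with
    | inl i => exact c1 _ _ h2 i
    | inr x => cases x with
      | inl i => exact c1 _ _ h3 i
      | inr i => exact c1 _ _ h4 i
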